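/- Let B be an associative R-algebra, M a B-bimodule, and A = T_B M the tensor algebra of M over B. Then there is a canonical isomorphism of A-bimodules A ⊗_B M ⊗_B A ≅ Ω¹_B A sending a₁ ⊗ m ⊗ a₂ to a₁ (d m) a₂, where d : A → Ω¹_B A is the universal derivation. -/

import Mathlib

/-!
STATEMENT 4: If `A = T_B M` is the tensor algebra of a `B`-bimodule `M`, then
`A ⊗_B M ⊗_B A ≅ Ω¹_B A`, via `a₁ ⊗ m ⊗ a₂ ↦ a₁ (d m) a₂`.

`A ⊗_B A` is realized as the quotient of `A ⊗_k A` by the balancing relations,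
`Ω¹_B A` as the kernel of the induced multiplication, and `A ⊗_B M ⊗_B A` via
the balancing submodule `Bal3` of `A ⊗_k M ⊗_k A`.  The statement asserts that
the canonical map `Φ` (with `Φ(a ⊗ m ⊗ c) = a (d m) c`) exists, has range
exactly `Ω¹_B A`, and kernel exactly the balancing relations, i.e. it induces
the canonical isomorphism `A ⊗_B M ⊗_B A ≅ Ω¹_B A`.
`A` being the tensor algebra `T_B M` is encoded by its universal property.
-/

open TensorProduct MulOpposite

noncomputable section
namespace Stmt4

variable (k : Type) [Field k] (B : Type) [Ring B] [Algebra k B]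
variable (A : Type) [Ring A] [Algebra k A] (ιB : B →ₐ[k] A)

/-- The balancing submodule defining `A ⊗_B A` as a quotient of `A ⊗_k A`. -/
def Bal : Submodule k (A ⊗[k] A) :=
  Submodule.span k {z | ∃ (x y : A) (r : B), z = (x * ιB r) ⊗ₜ[k] y - x ⊗ₜ[k] (ιB r * y)}

/-- `A ⊗_B A`, realized as a quotient of `A ⊗_k A`. -/
abbrev QR := (A ⊗[k] A) ⧸ Bal k B A ιB

/-- Left (outer) action of `a ∈ A` on `A ⊗_B A`. -/
def lact (a : A) : QR k B A ιB →ₗ[k] QR k B A ιB :=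
  Submodule.mapQ _ _ (LinearMap.mulLeft k ((a : A) ⊗ₜ[k] (1 : A))) (by
    rw [Bal, Submodule.span_le]
    rintro z ⟨x, y, r, rfl⟩
    simp only [SetLike.mem_coe, Submodule.mem_comap, LinearMap.mulLeft_apply, mul_sub,
      Algebra.TensorProduct.tmul_mul_tmul, mul_one, one_mul]
    exact Submodule.subset_span ⟨a * x, y, r, by rw [mul_assoc]⟩)

/-- Right (outer) action of `b ∈ A` on `A ⊗_B A`. -/
def ract (b : A) : QR k B A ιB →ₗ[k] QR k B A ιB :=
  Submodule.mapQ _ _ (LinearMap.mulRight k ((1 : A) ⊗ₜ[k] (b : A))) (by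
    rw [Bal, Submodule.span_le]
    rintro z ⟨x, y, r, rfl⟩
    simp only [SetLike.mem_coe, Submodule.mem_comap, LinearMap.mulRight_apply, sub_mul,
      Algebra.TensorProduct.tmul_mul_tmul, mul_one, one_mul]
    exact Submodule.subset_span ⟨x, y * b, r, by rw [mul_assoc]⟩)

/-- The multiplication map `A ⊗_B A → A`. -/
def mulBar : QR k B A ιB →ₗ[k] A :=
  Submodule.liftQ _ (LinearMap.mul' k A) (by
    rw [Bal, Submodule.span_le]
    rintro z ⟨x, y, r, rfl⟩
    simp [LinearMap.mul'_apply, mul_assoc])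

/-- `Ω¹_B A`, the kernel of the multiplication map `A ⊗_B A → A`. -/
def Omega : Submodule k (QR k B A ιB) := LinearMap.ker (mulBar k B A ιB)

/-- The universal derivation `d : A → A ⊗_B A`, `a ↦ 1 ⊗ a − a ⊗ 1`. -/
def d : A →ₗ[k] QR k B A ιB :=
  (Bal k B A ιB).mkQ ∘ₗ (TensorProduct.mk k A A 1 - (TensorProduct.mk k A A).flip 1)

set_option linter.unusedSectionVars false

section Aux
variable (M : Type) [AddCommGroup M] [Module k M] [Module B M] [Module Bᵐᵒᵖ M]
  [SMulCommClass B Bᵐᵒᵖ M] [IsScalarTower k B M] [IsScalarTower k Bᵐᵒᵖ M]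

def Bal3 : Submodule k (A ⊗[k] (M ⊗[k] A)) :=
  Submodule.span k
    ({z | ∃ (a c : A) (m : M) (b : B),
        z = (a * ιB b) ⊗ₜ[k] (m ⊗ₜ[k] c) - a ⊗ₜ[k] ((b • m) ⊗ₜ[k] c)} ∪
     {z | ∃ (a c : A) (m : M) (b : B),
        z = a ⊗ₜ[k] ((op b • m) ⊗ₜ[k] c) - a ⊗ₜ[k] (m ⊗ₜ[k] (ιB b * c))})

abbrev NN := (A ⊗[k] (M ⊗[k] A)) ⧸ Bal3 k B A ιB M

def lactT (x : A) : A ⊗[k] (M ⊗[k] A) →ₗ[k] A ⊗[k] (M ⊗[k] A) :=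
  LinearMap.rTensor _ (LinearMap.mulLeft k x)

def ractT (x : A) : A ⊗[k] (M ⊗[k] A) →ₗ[k] A ⊗[k] (M ⊗[k] A) :=
  LinearMap.lTensor A (LinearMap.lTensor M (LinearMap.mulRight k x))

@[simp] lemma lactT_tmul (x a c : A) (m : M) :
    lactT k A M x (a ⊗ₜ[k] (m ⊗ₜ[k] c)) = (x * a) ⊗ₜ[k] (m ⊗ₜ[k] c) := rfl

@[simp] lemma ractT_tmul (x a c : A) (m : M) :
    ractT k A M x (a ⊗ₜ[k] (m ⊗ₜ[k] c)) = a ⊗ₜ[k] (m ⊗ₜ[k] (c * x)) := rfl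

lemma lactT_bal (x : A) : Bal3 k B A ιB M ≤
    (Bal3 k B A ιB M).comap (lactT k A M x) := by
  rw [Bal3, Submodule.span_le]
  rintro z (⟨a, c, m, b, rfl⟩ | ⟨a, c, m, b, rfl⟩) <;>
    simp only [SetLike.mem_coe, Submodule.mem_comap, map_sub, lactT_tmul]
  · exact Submodule.subset_span (Or.inl ⟨x * a, c, m, b, by rw [mul_assoc]⟩)
  · exact Submodule.subset_span (Or.inr ⟨x * a, c, m, b, rfl⟩)

lemma ractT_bal (x : A) : Bal3 k B A ιB M ≤
    (Bal3 k B A ιB M).comap (ractT k A M x) := by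
  rw [Bal3, Submodule.span_le]
  rintro z (⟨a, c, m, b, rfl⟩ | ⟨a, c, m, b, rfl⟩) <;>
    simp only [SetLike.mem_coe, Submodule.mem_comap, map_sub, ractT_tmul]
  · exact Submodule.subset_span (Or.inl ⟨a, c * x, m, b, rfl⟩)
  · exact Submodule.subset_span (Or.inr ⟨a, c * x, m, b, by rw [mul_assoc]⟩)

def lactN (x : A) : NN k B A ιB M →ₗ[k] NN k B A ιB M :=
  Submodule.mapQ _ _ (lactT k A M x) (lactT_bal k B A ιB M x)

def ractN (x : A) : NN k B A ιB M →ₗ[k] NN k B A ιB M :=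
  Submodule.mapQ _ _ (ractT k A M x) (ractT_bal k B A ιB M x)

@[simp] lemma lactN_mk (x : A) (t : A ⊗[k] (M ⊗[k] A)) :
    lactN k B A ιB M x (Submodule.Quotient.mk t)
      = Submodule.Quotient.mk (lactT k A M x t) := rfl

@[simp] lemma ractN_mk (x : A) (t : A ⊗[k] (M ⊗[k] A)) :
    ractN k B A ιB M x (Submodule.Quotient.mk t)
      = Submodule.Quotient.mk (ractT k A M x t) := rfl

instance : SMul A (NN k B A ιB M) := ⟨fun x n => lactN k B A ιB M x n⟩
instance : SMul Aᵐᵒᵖ (NN k B A ιB M) := ⟨fun x n => ractN k B A ιB M x.unop n⟩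

lemma asmul_def (x : A) (n : NN k B A ιB M) : x • n = lactN k B A ιB M x n := rfl
lemma opsmul_def (x : Aᵐᵒᵖ) (n : NN k B A ιB M) : x • n = ractN k B A ιB M x.unop n := rfl

-- helper: equality of linear maps on the triple tensor by checking pure tensors
lemma ext3 {P : Type} [AddCommMonoid P] [Module k P]
    {f g : A ⊗[k] (M ⊗[k] A) →ₗ[k] P}
    (h : ∀ (a c : A) (m : M), f (a ⊗ₜ[k] (m ⊗ₜ[k] c)) = g (a ⊗ₜ[k] (m ⊗ₜ[k] c))) : f = g := by
  apply TensorProduct.ext'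
  intro a t
  induction t using TensorProduct.induction_on with
  | zero => simp [TensorProduct.tmul_zero]
  | tmul m c => exact h a c m
  | add s t hs ht =>
    rw [TensorProduct.tmul_add, map_add, map_add, hs, ht]

instance : Module A (NN k B A ιB M) where
  one_smul n := by
    obtain ⟨t, rfl⟩ := Submodule.Quotient.mk_surjective _ n
    rw [asmul_def, lactN_mk]
    congr 1
    rw [lactT, LinearMap.mulLeft_one, LinearMap.rTensor_id, LinearMap.id_apply]
  mul_smul x y n := by
    obtain ⟨t, rfl⟩ := Submodule.Quotient.mk_surjective _ n
    simp only [asmul_def, lactN_mk]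
    congr 1
    rw [lactT, LinearMap.mulLeft_mul, LinearMap.rTensor_comp, LinearMap.comp_apply]
    rfl
  smul_zero x := map_zero _
  smul_add x m n := map_add _ _ _
  add_smul x y n := by
    obtain ⟨t, rfl⟩ := Submodule.Quotient.mk_surjective _ n
    simp only [asmul_def, lactN_mk]
    have h : lactT k A M (x + y) t = lactT k A M x t + lactT k A M y t := by
      rw [← LinearMap.add_apply]
      congr 1
      apply TensorProduct.ext'
      intro a u
      simp [lactT, add_mul, TensorProduct.add_tmul]
    rw [h, Submodule.Quotient.mk_add]
  zero_smul n := by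
    obtain ⟨t, rfl⟩ := Submodule.Quotient.mk_surjective _ n
    rw [asmul_def, lactN_mk]
    rw [show lactT k A M (0 : A) t = 0 from ?_]
    · simp
    · rw [show lactT k A M (0:A) = 0 from ?_]
      · rfl
      apply TensorProduct.ext'
      intro a u
      simp [lactT]

instance : Module Aᵐᵒᵖ (NN k B A ιB M) where
  one_smul n := by
    obtain ⟨t, rfl⟩ := Submodule.Quotient.mk_surjective _ n
    rw [opsmul_def, ractN_mk]
    congr 1
    rw [ractT, unop_one, LinearMap.mulRight_one, LinearMap.lTensor_id, LinearMap.lTensor_id,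
      LinearMap.id_apply]
  mul_smul x y n := by
    obtain ⟨t, rfl⟩ := Submodule.Quotient.mk_surjective _ n
    simp only [opsmul_def, ractN_mk, unop_mul]
    congr 1
    rw [ractT, LinearMap.mulRight_mul, LinearMap.lTensor_comp, LinearMap.lTensor_comp,
      LinearMap.comp_apply]
    rfl
  smul_zero x := map_zero _
  smul_add x m n := map_add _ _ _
  add_smul x y n := by
    obtain ⟨t, rfl⟩ := Submodule.Quotient.mk_surjective _ n
    simp only [opsmul_def, ractN_mk, unop_add]
    have h : ractT k A M (x.unop + y.unop) t = ractT k A M x.unop t + ractT k A M y.unop t := by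
      rw [← LinearMap.add_apply]
      congr 1
      apply ext3
      intro a c m
      simp [mul_add, TensorProduct.tmul_add]
    rw [h, Submodule.Quotient.mk_add]
  zero_smul n := by
    obtain ⟨t, rfl⟩ := Submodule.Quotient.mk_surjective _ n
    rw [opsmul_def, ractN_mk]
    have h : ractT k A M ((0 : Aᵐᵒᵖ).unop) t = 0 := by
      rw [show ractT k A M ((0 : Aᵐᵒᵖ).unop) = 0 from ?_]
      · rfl
      apply ext3
      intro a c m
      simp [ractT]
    rw [h, Submodule.Quotient.mk_zero]

instance : SMulCommClass A Aᵐᵒᵖ (NN k B A ιB M) where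
  smul_comm x y n := by
    obtain ⟨t, rfl⟩ := Submodule.Quotient.mk_surjective _ n
    simp only [asmul_def, opsmul_def, lactN_mk, ractN_mk]
    congr 1
    have h : lactT k A M x ∘ₗ ractT k A M y.unop = ractT k A M y.unop ∘ₗ lactT k A M x := by
      apply ext3
      intro a c m
      rfl
    exact DFunLike.congr_fun h t

instance : IsScalarTower k A (NN k B A ιB M) where
  smul_assoc s x n := by
    obtain ⟨t, rfl⟩ := Submodule.Quotient.mk_surjective _ n
    simp only [asmul_def, lactN_mk]
    have h : lactT k A M (s • x) t = s • lactT k A M x t := by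
      rw [← LinearMap.smul_apply]
      congr 1
      apply ext3
      intro a c m
      simp [lactT, smul_mul_assoc, TensorProduct.smul_tmul']
    rw [h, Submodule.Quotient.mk_smul]

instance : IsScalarTower k Aᵐᵒᵖ (NN k B A ιB M) where
  smul_assoc s x n := by
    obtain ⟨t, rfl⟩ := Submodule.Quotient.mk_surjective _ n
    simp only [opsmul_def, ractN_mk, unop_smul]
    have h : ractT k A M (s • x.unop) t = s • ractT k A M x.unop t := by
      rw [← LinearMap.smul_apply]
      congr 1
      apply ext3
      intro a c m
      simp [ractT, mul_smul_comm, TensorProduct.tmul_smul]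
    rw [h, Submodule.Quotient.mk_smul]

lemma asmul_mk (x : A) (t : A ⊗[k] (M ⊗[k] A)) :
    x • (Submodule.Quotient.mk t : NN k B A ιB M)
      = Submodule.Quotient.mk (lactT k A M x t) := rfl

lemma opsmul_mk (x : A) (t : A ⊗[k] (M ⊗[k] A)) :
    op x • (Submodule.Quotient.mk t : NN k B A ιB M)
      = Submodule.Quotient.mk (ractT k A M x t) := rfl

variable (ιM : M →ₗ[k] A)

/-- `a ⊗ m ⊗ c ↦ a ⊗ (ιM m * c) - (a * ιM m) ⊗ c` in `A ⊗ A`. -/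
def phi0 : A ⊗[k] (M ⊗[k] A) →ₗ[k] A ⊗[k] A :=
  LinearMap.lTensor A (LinearMap.mul' k A ∘ₗ LinearMap.rTensor A ιM) -
    (LinearMap.rTensor A (LinearMap.mul' k A) ∘ₗ
      (TensorProduct.assoc k A A A).symm.toLinearMap ∘ₗ
        LinearMap.lTensor A (LinearMap.rTensor A ιM))

@[simp] lemma phi0_tmul (a c : A) (m : M) :
    phi0 k A M ιM (a ⊗ₜ[k] (m ⊗ₜ[k] c))
      = a ⊗ₜ[k] (ιM m * c) - (a * ιM m) ⊗ₜ[k] c := by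
  simp [phi0, LinearMap.mul'_apply]

def Phi : A ⊗[k] (M ⊗[k] A) →ₗ[k] QR k B A ιB :=
  (Bal k B A ιB).mkQ ∘ₗ phi0 k A M ιM

lemma d_apply (x : A) :
    d k B A ιB x = (Bal k B A ιB).mkQ (1 ⊗ₜ[k] x - x ⊗ₜ[k] 1) := rfl

lemma lact_mk (x : A) (t : A ⊗[k] A) :
    lact k B A ιB x ((Bal k B A ιB).mkQ t)
      = (Bal k B A ιB).mkQ ((x ⊗ₜ[k] (1:A)) * t) := rfl

lemma ract_mk (x : A) (t : A ⊗[k] A) :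
    ract k B A ιB x ((Bal k B A ιB).mkQ t)
      = (Bal k B A ιB).mkQ (t * ((1:A) ⊗ₜ[k] x)) := rfl

lemma Phi_tmul (a c : A) (m : M) :
    Phi k B A ιB M ιM (a ⊗ₜ[k] (m ⊗ₜ[k] c))
      = lact k B A ιB a (ract k B A ιB c (d k B A ιB (ιM m))) := by
  rw [d_apply, ract_mk, lact_mk]
  simp only [Phi, LinearMap.comp_apply, phi0_tmul, map_sub, Submodule.mkQ_apply,
    sub_mul, mul_sub, Algebra.TensorProduct.tmul_mul_tmul, one_mul, mul_one]

lemma d_iB (b : B) : d k B A ιB (ιB b) = 0 := by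
  rw [d_apply, Submodule.mkQ_apply, Submodule.Quotient.mk_eq_zero]
  have : (1 : A) ⊗ₜ[k] (ιB b) - (ιB b) ⊗ₜ[k] (1 : A)
      = -(((1 : A) * ιB b) ⊗ₜ[k] (1 : A) - (1 : A) ⊗ₜ[k] (ιB b * (1 : A))) := by
    rw [one_mul, mul_one, neg_sub]
  rw [this]
  exact neg_mem (Submodule.subset_span ⟨1, 1, b, rfl⟩)

lemma d_mul (x y : A) :
    d k B A ιB (x * y) = lact k B A ιB x (d k B A ιB y) + ract k B A ιB y (d k B A ιB x) := by
  simp only [d_apply, lact_mk, ract_mk, ← map_add]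
  congr 1
  simp only [mul_sub, sub_mul, Algebra.TensorProduct.tmul_mul_tmul, one_mul, mul_one]
  abel

lemma d_one : d k B A ιB 1 = 0 := by
  rw [d_apply]
  simp

lemma d_algebraMap (s : k) : d k B A ιB (algebraMap k A s) = 0 := by
  rw [Algebra.algebraMap_eq_smul_one, map_smul, d_one, smul_zero]

lemma lact_lact (x y : A) (w : QR k B A ιB) :
    lact k B A ιB x (lact k B A ιB y w) = lact k B A ιB (x * y) w := by
  obtain ⟨t, rfl⟩ := Submodule.Quotient.mk_surjective _ w
  show lact k B A ιB x (lact k B A ιB y ((Bal k B A ιB).mkQ t))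
      = lact k B A ιB (x * y) ((Bal k B A ιB).mkQ t)
  rw [lact_mk, lact_mk, lact_mk]
  congr 1
  rw [← mul_assoc, Algebra.TensorProduct.tmul_mul_tmul, one_mul]

lemma ract_ract (x y : A) (w : QR k B A ιB) :
    ract k B A ιB x (ract k B A ιB y w) = ract k B A ιB (y * x) w := by
  obtain ⟨t, rfl⟩ := Submodule.Quotient.mk_surjective _ w
  show ract k B A ιB x (ract k B A ιB y ((Bal k B A ιB).mkQ t))
      = ract k B A ιB (y * x) ((Bal k B A ιB).mkQ t)
  rw [ract_mk, ract_mk, ract_mk]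
  congr 1
  rw [mul_assoc, Algebra.TensorProduct.tmul_mul_tmul, one_mul]

lemma lact_ract_comm (x y : A) (w : QR k B A ιB) :
    lact k B A ιB x (ract k B A ιB y w) = ract k B A ιB y (lact k B A ιB x w) := by
  obtain ⟨t, rfl⟩ := Submodule.Quotient.mk_surjective _ w
  show lact k B A ιB x (ract k B A ιB y ((Bal k B A ιB).mkQ t))
      = ract k B A ιB y (lact k B A ιB x ((Bal k B A ιB).mkQ t))
  rw [lact_mk, ract_mk, lact_mk, ract_mk, mul_assoc]

lemma ract_one (w : QR k B A ιB) : ract k B A ιB 1 w = w := by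
  obtain ⟨t, rfl⟩ := Submodule.Quotient.mk_surjective _ w
  show ract k B A ιB 1 ((Bal k B A ιB).mkQ t) = (Bal k B A ιB).mkQ t
  rw [ract_mk]
  congr 1
  rw [show (1:A) ⊗ₜ[k] (1:A) = (1 : A ⊗[k] A) from rfl, mul_one]

lemma mulBar_mk (t : A ⊗[k] A) :
    mulBar k B A ιB ((Bal k B A ιB).mkQ t) = LinearMap.mul' k A t := rfl

/-- `M`-valued linear map `fM` into the trivial square zero extension. -/
def fMmap : M →ₗ[k] TrivSqZeroExt A (NN k B A ιB M) where
  toFun m := (ιM m, Submodule.Quotient.mk ((1:A) ⊗ₜ[k] (m ⊗ₜ[k] (1:A))))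
  map_add' m m' := TrivSqZeroExt.ext (by simp; rfl) (by
    simp [TensorProduct.tmul_add, TensorProduct.add_tmul, ← Submodule.Quotient.mk_add]
    rw [Submodule.Quotient.mk_add]; rfl)
  map_smul' s m := TrivSqZeroExt.ext (by simp; rfl) (by
    have : (1:A) ⊗ₜ[k] ((s • m) ⊗ₜ[k] (1:A)) = s • ((1:A) ⊗ₜ[k] (m ⊗ₜ[k] (1:A))) := by
      rw [← TensorProduct.tmul_smul, TensorProduct.smul_tmul']
    simp [this, ← Submodule.Quotient.mk_smul]
    rw [Submodule.Quotient.mk_smul]; rfl)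

@[simp] lemma fMmap_fst (m : M) : (fMmap k B A ιB M ιM m).fst = ιM m := rfl
@[simp] lemma fMmap_snd (m : M) :
    (fMmap k B A ιB M ιM m).snd
      = Submodule.Quotient.mk ((1:A) ⊗ₜ[k] (m ⊗ₜ[k] (1:A))) := rfl

end Aux

set_option maxHeartbeats 2000000

theorem statement4
    (M : Type) [AddCommGroup M] [Module k M] [Module B M] [Module Bᵐᵒᵖ M]
    [SMulCommClass B Bᵐᵒᵖ M] [IsScalarTower k B M] [IsScalarTower k Bᵐᵒᵖ M]
    (ιM : M →ₗ[k] A)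
    (hL : ∀ (b : B) (m : M), ιM (b • m) = ιB b * ιM m)
    (hR : ∀ (b : B) (m : M), ιM (op b • m) = ιM m * ιB b)
    -- `A` is the tensor algebra `T_B M`: universal property.
    (hUP : ∀ (C : Type) [Ring C] [Algebra k C] (fB : B →ₐ[k] C) (fM : M →ₗ[k] C),
      (∀ (b : B) (m : M), fM (b • m) = fB b * fM m) →
      (∀ (b : B) (m : M), fM (op b • m) = fM m * fB b) →
      ∃! F : A →ₐ[k] C, (∀ b : B, F (ιB b) = fB b) ∧ (∀ m : M, F (ιM m) = fM m)) :
    -- Conclusion: the canonical map `A ⊗ M ⊗ A → A ⊗_B A`,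
    -- `a ⊗ m ⊗ c ↦ a (d m) c`, has range `Ω¹_B A` and kernel the balancing
    -- submodule, i.e. it induces an isomorphism `A ⊗_B M ⊗_B A ≅ Ω¹_B A`.
    ∃ Φ : A ⊗[k] (M ⊗[k] A) →ₗ[k] QR k B A ιB,
      (∀ (a c : A) (m : M),
        Φ (a ⊗ₜ[k] (m ⊗ₜ[k] c)) = lact k B A ιB a (ract k B A ιB c (d k B A ιB (ιM m)))) ∧
      LinearMap.range Φ = Omega k B A ιB ∧
      LinearMap.ker Φ = Submodule.span k
        ({z | ∃ (a c : A) (m : M) (b : B),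
            z = (a * ιB b) ⊗ₜ[k] (m ⊗ₜ[k] c) - a ⊗ₜ[k] ((b • m) ⊗ₜ[k] c)} ∪
         {z | ∃ (a c : A) (m : M) (b : B),
            z = a ⊗ₜ[k] ((op b • m) ⊗ₜ[k] c) - a ⊗ₜ[k] (m ⊗ₜ[k] (ιB b * c))}) := by
  classical
  -- generation of `A` by `ιB` and `ιM`
  have hgen : ∀ a : A, a ∈ Algebra.adjoin k (Set.range ⇑ιB ∪ Set.range ⇑ιM) := by
    set S := Algebra.adjoin k (Set.range ⇑ιB ∪ Set.range ⇑ιM) with hS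
    have hBmem : ∀ b, ιB b ∈ S := fun b => Algebra.subset_adjoin (Or.inl ⟨b, rfl⟩)
    have hMmem : ∀ m, ιM m ∈ S := fun m => Algebra.subset_adjoin (Or.inr ⟨m, rfl⟩)
    obtain ⟨G, ⟨hGB, hGM⟩, _⟩ := hUP S (ιB.codRestrict S hBmem)
      (ιM.codRestrict (Subalgebra.toSubmodule S) hMmem)
      (fun b m => Subtype.ext (hL b m))
      (fun b m => Subtype.ext (hR b m))
    obtain ⟨F₀, _, huniq⟩ := hUP A ιB ιM hL hR
    have h1 : S.val.comp G = F₀ := huniq _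
      ⟨fun b => by simp only [AlgHom.coe_comp, Function.comp_apply, hGB]; rfl,
       fun m => by simp only [AlgHom.coe_comp, Function.comp_apply, hGM]; rfl⟩
    have h2 : AlgHom.id k A = F₀ := huniq _ ⟨fun b => rfl, fun m => rfl⟩
    intro a
    have hv : S.val (G a) = a := by
      rw [show S.val (G a) = (S.val.comp G) a from rfl, h1, ← h2]; rfl
    rw [← hv]; exact (G a).2
  have hker1 : ∀ t, Phi k B A ιB M ιM t = 0 → t ∈ Bal3 k B A ιB M := by
  -- the derivation `D : A → N` via the square-zero extension
    obtain ⟨F, ⟨hFB, hFM⟩, _⟩ := hUP (TrivSqZeroExt A (NN k B A ιB M))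
      ((TrivSqZeroExt.inlAlgHom k A (NN k B A ιB M)).comp ιB) (fMmap k B A ιB M ιM)
      (fun b m => TrivSqZeroExt.ext
        (by simpa using hL b m)
        (by
          simp only [fMmap_snd, AlgHom.coe_comp, Function.comp_apply,
            TrivSqZeroExt.inlAlgHom_apply, TrivSqZeroExt.snd_mul, TrivSqZeroExt.snd_inl,
            TrivSqZeroExt.fst_inl, fMmap_fst, smul_zero, add_zero]
          rw [asmul_mk, lactT_tmul]
          rw [Submodule.Quotient.eq]
          have : (1:A) ⊗ₜ[k] ((b • m) ⊗ₜ[k] (1:A)) - (ιB b * 1) ⊗ₜ[k] (m ⊗ₜ[k] (1:A))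
              = -(((1:A) * ιB b) ⊗ₜ[k] (m ⊗ₜ[k] (1:A)) - (1:A) ⊗ₜ[k] ((b • m) ⊗ₜ[k] (1:A))) := by
            rw [one_mul, mul_one, neg_sub]
          rw [this]
          exact neg_mem (Submodule.subset_span (Or.inl ⟨1, 1, m, b, rfl⟩))))
      (fun b m => TrivSqZeroExt.ext
        (by simpa using hR b m)
        (by
          simp only [fMmap_snd, AlgHom.coe_comp, Function.comp_apply,
            TrivSqZeroExt.inlAlgHom_apply, TrivSqZeroExt.snd_mul, TrivSqZeroExt.snd_inl,
            TrivSqZeroExt.fst_inl, fMmap_fst, smul_zero, zero_add]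
          rw [opsmul_mk, ractT_tmul]
          rw [Submodule.Quotient.eq]
          have : (1:A) ⊗ₜ[k] ((op b • m) ⊗ₜ[k] (1:A)) - (1:A) ⊗ₜ[k] (m ⊗ₜ[k] ((1:A) * ιB b))
              = (1:A) ⊗ₜ[k] ((op b • m) ⊗ₜ[k] (1:A)) - (1:A) ⊗ₜ[k] (m ⊗ₜ[k] (ιB b * (1:A))) := by
            rw [one_mul, mul_one]
          rw [this]
          exact Submodule.subset_span (Or.inr ⟨1, 1, m, b, rfl⟩)))
    obtain ⟨F₀, _, huniq⟩ := hUP A ιB ιM hL hR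
    have hfst : ∀ a : A, (F a).fst = a := by
      have h1 : (TrivSqZeroExt.fstHom k A (NN k B A ιB M)).comp F = F₀ := huniq _
        ⟨fun b => by simp [hFB], fun m => by simp [hFM]⟩
      have h2 : AlgHom.id k A = F₀ := huniq _ ⟨fun b => rfl, fun m => rfl⟩
      intro a
      rw [show (F a).fst = ((TrivSqZeroExt.fstHom k A (NN k B A ιB M)).comp F) a from rfl, h1,
        ← h2]; rfl
    set D : A →ₗ[k] NN k B A ιB M :=
      { toFun := fun a => (F a).snd
        map_add' := fun x y => by
          show (F (x + y)).snd = (F x).snd + (F y).snd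
          rw [map_add, TrivSqZeroExt.snd_add]
        map_smul' := fun s x => by
          show (F (s • x)).snd = s • (F x).snd
          rw [map_smul, TrivSqZeroExt.snd_smul] } with hD
    have hD1 : ∀ b, D (ιB b) = 0 := fun b => by
      simp only [hD, LinearMap.coe_mk, AddHom.coe_mk, hFB, AlgHom.coe_comp, Function.comp_apply,
        TrivSqZeroExt.inlAlgHom_apply, TrivSqZeroExt.snd_inl]
    have hD2 : ∀ m, D (ιM m) = Submodule.Quotient.mk ((1:A) ⊗ₜ[k] (m ⊗ₜ[k] (1:A))) := fun m => by
      simp only [hD, LinearMap.coe_mk, AddHom.coe_mk, hFM, fMmap_snd]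
    have hD3 : ∀ x y : A, D (x * y) = x • D y + op y • D x := fun x y => by
      simp only [hD, LinearMap.coe_mk, AddHom.coe_mk, map_mul, TrivSqZeroExt.snd_mul, hfst]
    -- the inverse pairing `Ψ : QR → NN`
    set L : A →ₗ[k] A →ₗ[k] NN k B A ιB M := LinearMap.mk₂ k (fun x y => x • D y)
      (fun x x' y => by show (x + x') • D y = x • D y + x' • D y; rw [add_smul])
      (fun s x y => by show (s • x) • D y = s • (x • D y); rw [smul_assoc])
      (fun x y y' => by show x • D (y + y') = x • D y + x • D y'; rw [map_add, smul_add])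
      (fun s x y => by show x • D (s • y) = s • (x • D y); rw [map_smul, smul_comm]) with hLdef
    set ψ₀ : A ⊗[k] A →ₗ[k] NN k B A ιB M := TensorProduct.lift L with hψdef
    have hψt : ∀ x y : A, ψ₀ (x ⊗ₜ[k] y) = x • D y := fun x y => rfl
    have hψbal : Bal k B A ιB ≤ LinearMap.ker ψ₀ := by
      rw [Bal, Submodule.span_le]
      rintro z ⟨x, y, r, rfl⟩
      simp only [SetLike.mem_coe, LinearMap.mem_ker, map_sub, hψt]
      rw [hD3, hD1]
      simp [← mul_smul]
    set Ψ : QR k B A ιB →ₗ[k] NN k B A ιB M := Submodule.liftQ (Bal k B A ιB) ψ₀ hψbal with hΨdef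
    have hΨmk : ∀ t : A ⊗[k] A, Ψ ((Bal k B A ιB).mkQ t) = ψ₀ t := fun t => rfl
    have hΨΦ : ∀ t, Ψ (Phi k B A ιB M ιM t) = Submodule.Quotient.mk t := by
      have hcomp : Ψ ∘ₗ Phi k B A ιB M ιM = (Bal3 k B A ιB M).mkQ := by
        apply ext3
        intro a c m
        show Ψ ((Bal k B A ιB).mkQ (phi0 k A M ιM (a ⊗ₜ[k] (m ⊗ₜ[k] c))))
          = (Bal3 k B A ιB M).mkQ (a ⊗ₜ[k] (m ⊗ₜ[k] c))
        rw [hΨmk, phi0_tmul, map_sub, hψt, hψt, hD3, smul_add, ← mul_smul, add_sub_cancel_left,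
          hD2]
        rw [show ((Bal3 k B A ιB M).mkQ (a ⊗ₜ[k] (m ⊗ₜ[k] c)))
            = Submodule.Quotient.mk (a ⊗ₜ[k] (m ⊗ₜ[k] c)) from rfl]
        rw [opsmul_mk, ractT_tmul, asmul_mk, lactT_tmul, mul_one, one_mul]
      intro t
      exact DFunLike.congr_fun hcomp t
    intro t ht
    have h := hΨΦ t
    rw [ht, map_zero] at h
    rwa [eq_comm, Submodule.Quotient.mk_eq_zero] at h
  -- conclusion
  refine ⟨Phi k B A ιB M ιM, fun a c m => Phi_tmul k B A ιB M ιM a c m, ?_, ?_⟩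
  · -- range = Omega
    apply le_antisymm
    · rintro w ⟨t, rfl⟩
      have h0 : mulBar k B A ιB ∘ₗ Phi k B A ιB M ιM = 0 := by
        apply ext3
        intro a c m
        show mulBar k B A ιB ((Bal k B A ιB).mkQ (phi0 k A M ιM (a ⊗ₜ[k] (m ⊗ₜ[k] c)))) = 0
        rw [phi0_tmul, mulBar_mk, map_sub, LinearMap.mul'_apply, LinearMap.mul'_apply,
          mul_assoc, sub_self]
      show mulBar k B A ιB (Phi k B A ιB M ιM t) = 0
      exact DFunLike.congr_fun h0 t
    · intro w hw
      obtain ⟨t, rfl⟩ := Submodule.Quotient.mk_surjective _ w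
      have hmul : LinearMap.mul' k A t = 0 := hw
      have key : ∀ y x c : A,
          lact k B A ιB x (ract k B A ιB c (d k B A ιB y))
            ∈ LinearMap.range (Phi k B A ιB M ιM) := by
        intro y
        refine Algebra.adjoin_induction
          (p := fun y _ => ∀ x c : A, lact k B A ιB x (ract k B A ιB c (d k B A ιB y))
            ∈ LinearMap.range (Phi k B A ιB M ιM))
          (fun y hy => ?_) (fun r => ?_)
          (fun y z _ _ hpy hpz => ?_) (fun y z _ _ hpy hpz => ?_) (hgen y)
        · rcases hy with ⟨b, rfl⟩ | ⟨m, rfl⟩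
          · intro x c; rw [d_iB, map_zero, map_zero]; exact zero_mem _
          · intro x c; exact ⟨x ⊗ₜ[k] (m ⊗ₜ[k] c), Phi_tmul k B A ιB M ιM x c m⟩
        · intro x c; rw [d_algebraMap, map_zero, map_zero]; exact zero_mem _
        · intro x c; rw [map_add, map_add, map_add]; exact add_mem (hpy x c) (hpz x c)
        · intro x c
          rw [d_mul, map_add, map_add]
          refine add_mem ?_ ?_
          · rw [← lact_ract_comm, lact_lact]; exact hpz (x * y) c
          · rw [ract_ract]; exact hpy x (z * c)
      have claim : ∀ s : A ⊗[k] A,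
          (Bal k B A ιB).mkQ s - (Bal k B A ιB).mkQ ((LinearMap.mul' k A s) ⊗ₜ[k] (1:A))
            ∈ LinearMap.range (Phi k B A ιB M ιM) := by
        intro s
        induction s using TensorProduct.induction_on with
        | zero => simp
        | tmul x y =>
          have hxy : (Bal k B A ιB).mkQ (x ⊗ₜ[k] y)
              - (Bal k B A ιB).mkQ ((LinearMap.mul' k A (x ⊗ₜ[k] y)) ⊗ₜ[k] (1:A))
              = lact k B A ιB x (d k B A ιB y) := by
            rw [LinearMap.mul'_apply, d_apply, lact_mk, ← map_sub]
            congr 1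
            rw [mul_sub, Algebra.TensorProduct.tmul_mul_tmul,
              Algebra.TensorProduct.tmul_mul_tmul, mul_one, one_mul, mul_one]
          rw [hxy]
          have hk := key y x 1
          rwa [ract_one] at hk
        | add u v hu hv =>
          rw [map_add, map_add, TensorProduct.add_tmul, map_add]
          convert add_mem hu hv using 1
          abel
      have hc := claim t
      rw [hmul, TensorProduct.zero_tmul, map_zero, sub_zero] at hc
      exact hc
  · -- kernel = balancing relations
    apply le_antisymm
    · intro t ht
      rw [LinearMap.mem_ker] at ht
      exact hker1 t ht
    · rw [Submodule.span_le]
      rintro z (⟨a, c, m, b, rfl⟩ | ⟨a, c, m, b, rfl⟩) <;>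
        simp only [SetLike.mem_coe, LinearMap.mem_ker, map_sub] <;>
        rw [sub_eq_zero, ← sub_eq_zero, ← map_sub,
          show Phi k B A ιB M ιM = (Bal k B A ιB).mkQ ∘ₗ phi0 k A M ιM from rfl,
          LinearMap.comp_apply, map_sub, Submodule.mkQ_apply, Submodule.Quotient.mk_eq_zero,
          phi0_tmul, phi0_tmul]
      · rw [hL]
        have he : ((a * ιB b) ⊗ₜ[k] (ιM m * c) - (a * ιB b * ιM m) ⊗ₜ[k] c)
            - (a ⊗ₜ[k] (ιB b * ιM m * c) - (a * (ιB b * ιM m)) ⊗ₜ[k] c)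
            = (a * ιB b) ⊗ₜ[k] (ιM m * c) - a ⊗ₜ[k] (ιB b * (ιM m * c)) := by
          simp only [mul_assoc]
          abel
        rw [he]
        exact Submodule.subset_span ⟨a, ιM m * c, b, rfl⟩
      · rw [hR]
        have he : (a ⊗ₜ[k] (ιM m * ιB b * c) - (a * (ιM m * ιB b)) ⊗ₜ[k] c)
            - (a ⊗ₜ[k] (ιM m * (ιB b * c)) - (a * ιM m) ⊗ₜ[k] (ιB b * c))
            = -((a * ιM m * ιB b) ⊗ₜ[k] c - (a * ιM m) ⊗ₜ[k] (ιB b * c)) := by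
          simp only [mul_assoc]
          abel
        rw [he]
        exact neg_mem (Submodule.subset_span ⟨a * ιM m, c, b, rfl⟩)



end Stmt4
end
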